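/- Achievability for the surrogate BES source coding problem: for the ternary memoryless source with P(0) = P(1) = (1 − δ)/2, P(?) = δ, binary reproduction alphabet, and separable surrogate distortion d̄ (with d̄(0,0) = d̄(1,1) = 0, d̄(0,1) = d̄(1,0) = 1, d̄(?,0) = d̄(?,1) = 1/2), there exists a (k, M, d, ε) code with ε ≤ Σ_{j=0}^{k} C(k, j)·δ^j·(1 − δ)^{k−j} · ( 1 − 2^{−(k−j)}·⟨k−j choose ≤ ⌊kd − j/2⌋⟩ )^M, where ⟨n choose ≤ m⟩ = Σ_{i=0}^{m} C(n, i), with the conventions ⟨n choose ≤ m⟩ = 0 if m < 0 and ⟨n choose ≤ m⟩ = 2^n if m > n. -/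

import Mathlib

open scoped BigOperators

noncomputable section

/-- The ternary source on `{0, 1, ?}` (erasure symbol `none`):
`P(0) = P(1) = (1−δ)/2`, `P(?) = δ`. -/
def P3 (δ : ℝ) : Option Bool → ℝ :=
  fun x => if x = none then δ else (1 - δ) / 2

/-- The surrogate distortion of the erased-fair-coin-flips problem:
`d̄(0,0) = d̄(1,1) = 0`, `d̄(0,1) = d̄(1,0) = 1`, `d̄(?, z) = 1/2`. -/
def dbarBes : Option Bool → Bool → ℝ :=
  fun x z => match x with
    | none => 1 / 2
    | some b => if b = z then 0 else 1

/-- Sum of binomial coefficients `⟨n choose ≤ m⟩ = Σ_{i=0}^{m} C(n,i)`, with the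
conventions that it is `0` for `m < 0` and `2^n` for `m > n`. -/
def binosum (n : ℕ) (m : ℤ) : ℕ :=
  ∑ i ∈ Finset.range (n + 1), if (i : ℤ) ≤ m then n.choose i else 0

/-- Excess-distortion probability of the code `(f, c)` at blocklength `k`,
distortion threshold `d`, for the ternary memoryless source `P3 δ` and the separable
surrogate distortion `dbarBes`. -/
def excessBes (δ d : ℝ) (k M : ℕ) (f : (Fin k → Option Bool) → Fin M)
    (c : Fin M → (Fin k → Bool)) : ℝ :=
  ∑ x : Fin k → Option Bool, (∏ i, P3 δ (x i)) *
    (if d < (∑ i, dbarBes (x i) (c (f x) i)) / k then (1:ℝ) else 0)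

/- ### Auxiliary lemmas -/

lemma sum_powerset_card {ι β : Type*} [DecidableEq ι] [AddCommMonoid β] (u : Finset ι)
    (g : ℕ → β) :
    ∑ s ∈ u.powerset, g s.card = ∑ j ∈ Finset.range (u.card + 1), (u.card.choose j) • g j := by
  exact Finset.sum_powerset_apply_card g

lemma prod_ite_card {ι : Type*} [Fintype ι] [DecidableEq ι] (u : Finset ι) (a b : ℕ) :
    ∏ i : ι, (if i ∈ u then a else b) = a ^ u.card * b ^ (Fintype.card ι - u.card) := by
  rw [Finset.prod_ite, Finset.prod_const, Finset.prod_const]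
  congr 2
  · simp [Finset.filter_mem_eq_inter]
  · rw [← Finset.card_univ, ← Finset.card_sdiff_of_subset (Finset.subset_univ u)]
    congr 1
    ext i; simp

lemma card_ball (k : ℕ) (x : Fin k → Option Bool) (m : ℤ) :
    (Finset.univ.filter (fun z : Fin k → Bool =>
      ((((Finset.univ.filter (fun i => ¬ x i = none)).filter
          (fun i => ¬ (x i).getD false = z i)).card : ℤ) ≤ m))).card
      = 2 ^ (Finset.univ.filter (fun i : Fin k => x i = none)).card *
          binosum (k - (Finset.univ.filter (fun i : Fin k => x i = none)).card) m := by
  set u : Finset (Fin k) := Finset.univ.filter (fun i => ¬ x i = none) with hu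
  set s : Finset (Fin k) := Finset.univ.filter (fun i => x i = none) with hs
  have hcard : s.card + u.card = k := by
    rw [hs, hu, Finset.card_filter_add_card_filter_not]
    simp
  set T : (Fin k → Bool) → Finset (Fin k) := fun z => u.filter (fun i => ¬ (x i).getD false = z i)
    with hT
  have hmaps : ∀ z ∈ (Finset.univ : Finset (Fin k → Bool)), T z ∈ u.powerset := fun z _ =>
    Finset.mem_powerset.mpr (Finset.filter_subset _ _)
  have fibercard : ∀ A ∈ u.powerset, (Finset.univ.filter (fun z : Fin k → Bool => T z = A)).card
      = 2 ^ s.card := by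
    intro A hA
    have hAu : A ⊆ u := Finset.mem_powerset.mp hA
    set t : Fin k → Finset Bool := fun i =>
      if i ∈ u then {if i ∈ A then !(x i).getD false else (x i).getD false} else Finset.univ
      with ht
    have hpred : ∀ z : Fin k → Bool, T z = A ↔ ∀ i, z i ∈ t i := by
      intro z
      constructor
      · intro h i
        by_cases hi : i ∈ u
        · have hiA : i ∈ A ↔ ¬ (x i).getD false = z i := by
            rw [← h, hT]; simp [Finset.mem_filter, hi]
          simp only [ht, hi, if_true, Finset.mem_singleton]
          by_cases hA' : i ∈ A
          · have := hiA.mp hA'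
            simp [hA']
            cases hb : (x i).getD false <;> cases hz : z i <;> simp_all
          · have := hiA
            simp [hA'] at this ⊢
            cases hb : (x i).getD false <;> cases hz : z i <;> simp_all
        · simp [ht, hi]
      · intro h
        ext i
        simp only [hT, Finset.mem_filter]
        by_cases hi : i ∈ u
        · have := h i
          simp only [ht, hi, if_true, Finset.mem_singleton] at this
          by_cases hA' : i ∈ A
          · simp only [hA', if_true] at this
            simp [hi, hA', this]
          · simp only [hA', if_false] at this
            simp [hi, hA', this]
        · constructor
          · rintro ⟨h1, _⟩; exact absurd h1 hi
          · intro h1; exact absurd (hAu h1) hi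
    have hfp : Finset.univ.filter (fun z : Fin k → Bool => T z = A) = Fintype.piFinset t := by
      ext z
      simp only [Finset.mem_filter, Finset.mem_univ, true_and, Fintype.mem_piFinset]
      exact hpred z
    rw [hfp, Fintype.card_piFinset]
    have htc : ∀ i, (t i).card = if i ∈ u then 1 else 2 := by
      intro i; by_cases hi : i ∈ u <;> simp [ht, hi]
    simp only [htc]
    rw [prod_ite_card]
    simp only [one_pow, one_mul, Fintype.card_fin]
    congr 1
    omega
  calc (Finset.univ.filter (fun z : Fin k → Bool => (((T z).card : ℤ) ≤ m))).card
      = ∑ z : Fin k → Bool, if ((T z).card : ℤ) ≤ m then 1 else 0 := by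
        rw [Finset.card_filter]
    _ = ∑ A ∈ u.powerset, ∑ z ∈ Finset.univ.filter (fun z => T z = A),
          (if ((T z).card : ℤ) ≤ m then 1 else 0) := by
        rw [Finset.sum_fiberwise_of_maps_to hmaps]
    _ = ∑ A ∈ u.powerset, 2 ^ s.card * (if ((A.card : ℤ)) ≤ m then 1 else 0) := by
        refine Finset.sum_congr rfl fun A hA => ?_
        rw [Finset.sum_congr rfl (fun z hz => by
          rw [(Finset.mem_filter.mp hz).2]), Finset.sum_const, fibercard A hA]
        rw [smul_eq_mul]
    _ = 2 ^ s.card * ∑ A ∈ u.powerset, (if ((A.card : ℤ)) ≤ m then 1 else 0) := by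
        rw [Finset.mul_sum]
    _ = 2 ^ s.card * binosum (k - s.card) m := by
        congr 1
        rw [sum_powerset_card u (fun n => if ((n : ℤ)) ≤ m then 1 else 0)]
        have hun : u.card = k - s.card := by omega
        rw [hun, binosum]
        refine Finset.sum_congr rfl fun j _ => ?_
        split_ifs <;> simp

lemma dist_eq (k : ℕ) (x : Fin k → Option Bool) (z : Fin k → Bool) :
    (∑ i, dbarBes (x i) (z i))
      = ((Finset.univ.filter (fun i : Fin k => x i = none)).card : ℝ) / 2
        + (((Finset.univ.filter (fun i : Fin k => ¬ x i = none)).filter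
            (fun i => ¬ (x i).getD false = z i)).card : ℝ) := by
  rw [← Finset.sum_filter_add_sum_filter_not Finset.univ (fun i => x i = none)]
  congr 1
  · rw [Finset.sum_congr rfl (fun i hi => show dbarBes (x i) (z i) = (1:ℝ)/2 from ?_),
      Finset.sum_const]
    · rw [nsmul_eq_mul]; ring
    · have hxi : x i = none := (Finset.mem_filter.mp hi).2
      simp [dbarBes, hxi]
  · rw [Finset.sum_congr rfl (fun i hi =>
      show dbarBes (x i) (z i) = if ¬ (x i).getD false = z i then (1:ℝ) else 0 from ?_),
      Finset.sum_boole]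
    have hxi : ¬ x i = none := (Finset.mem_filter.mp hi).2
    cases hx : x i with
    | none => exact absurd hx hxi
    | some b => simp only [dbarBes, hx, Option.getD_some]; split_ifs <;> simp_all

lemma prod_P3 (δ : ℝ) (k : ℕ) (s : Finset (Fin k)) (x : Fin k → Option Bool)
    (hx : Finset.univ.filter (fun i => x i = none) = s) :
    ∏ i, P3 δ (x i) = δ ^ s.card * ((1 - δ)/2) ^ (k - s.card) := by
  rw [← Finset.prod_filter_mul_prod_filter_not Finset.univ (fun i => x i = none)]
  have h1 : ∀ i ∈ Finset.univ.filter (fun i : Fin k => x i = none), P3 δ (x i) = δ := by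
    intro i hi; simp [P3, (Finset.mem_filter.mp hi).2]
  have h2 : ∀ i ∈ Finset.univ.filter (fun i : Fin k => ¬ x i = none),
      P3 δ (x i) = (1 - δ)/2 := by
    intro i hi; simp [P3, (Finset.mem_filter.mp hi).2]
  rw [Finset.prod_congr rfl h1, Finset.prod_congr rfl h2, Finset.prod_const, Finset.prod_const,
    hx]
  congr 2
  have := Finset.card_filter_add_card_filter_not (s := (Finset.univ : Finset (Fin k)))
    (p := fun i => x i = none)
  rw [hx] at this
  simp only [Finset.card_univ, Fintype.card_fin] at this
  omega

lemma card_pattern (k : ℕ) (s : Finset (Fin k)) :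
    (Finset.univ.filter (fun x : Fin k → Option Bool =>
        Finset.univ.filter (fun i => x i = none) = s)).card = 2 ^ (k - s.card) := by
  set t : Fin k → Finset (Option Bool) :=
    fun i => if i ∈ s then {none} else {some false, some true} with ht
  have hpred : ∀ x : Fin k → Option Bool,
      (Finset.univ.filter (fun i => x i = none) = s) ↔ ∀ i, x i ∈ t i := by
    intro x
    constructor
    · intro h i
      have hmem : x i = none ↔ i ∈ s := by
        rw [← h]; simp
      by_cases hi : i ∈ s
      · simp [ht, hi, hmem.mpr hi]
      · have : ¬ x i = none := fun hc => hi (hmem.mp hc)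
        cases hx : x i with
        | none => exact absurd hx this
        | some b => cases b <;> simp [ht, hi, hx]
    · intro h
      ext i
      simp only [Finset.mem_filter, Finset.mem_univ, true_and]
      by_cases hi : i ∈ s
      · have := h i; simp [ht, hi] at this; simp [this, hi]
      · have := h i; simp [ht, hi] at this
        constructor
        · intro hc; rw [hc] at this; rcases this with h' | h' <;> exact absurd h'.symm (by simp)
        · intro hc; exact absurd hc hi
  have hfp : (Finset.univ.filter (fun x : Fin k → Option Bool =>
      Finset.univ.filter (fun i => x i = none) = s)) = Fintype.piFinset t := by
    ext x
    simp only [Finset.mem_filter, Finset.mem_univ, true_and, Fintype.mem_piFinset]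
    exact hpred x
  rw [hfp, Fintype.card_piFinset]
  have htc : ∀ i, (t i).card = if i ∈ s then 1 else 2 := by
    intro i; by_cases hi : i ∈ s <;> simp [ht, hi]
  simp only [htc]
  rw [prod_ite_card]
  simp only [one_pow, one_mul, Fintype.card_fin]

lemma ite_forall_prod {M : ℕ} (Q : Fin M → Prop) [DecidablePred Q] :
    (if ∀ m, Q m then (1:ℝ) else 0) = ∏ m, if Q m then (1:ℝ) else 0 := by
  by_cases h : ∀ m, Q m
  · rw [if_pos h]
    rw [Finset.prod_congr rfl (fun m _ => if_pos (h m)), Finset.prod_const, one_pow]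
  · rw [if_neg h]
    push_neg at h
    obtain ⟨m, hm⟩ := h
    rw [eq_comm]
    exact Finset.prod_eq_zero (Finset.mem_univ m) (if_neg hm)

lemma sum_prod_codebook {k M : ℕ} (g : (Fin k → Bool) → ℝ) :
    ∑ c : Fin M → (Fin k → Bool), ∏ m, g (c m) = (∑ z : Fin k → Bool, g z) ^ M := by
  rw [← Fintype.piFinset_univ, Finset.sum_prod_piFinset, Finset.prod_const, Finset.card_univ,
    Fintype.card_fin]

lemma sum_z (k : ℕ) (d : ℝ) (x : Fin k → Option Bool) :
    ∑ z : Fin k → Bool, (if (k:ℝ) * d < ∑ i, dbarBes (x i) (z i) then (1:ℝ) else 0)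
      = 2 ^ k - 2 ^ ((Finset.univ.filter (fun i : Fin k => x i = none)).card) *
          (binosum (k - (Finset.univ.filter (fun i : Fin k => x i = none)).card)
            ⌊(k:ℝ) * d - ((Finset.univ.filter (fun i : Fin k => x i = none)).card : ℝ)/2⌋ : ℝ) := by
  set m₀ : ℤ := ⌊(k:ℝ) * d -
    ((Finset.univ.filter (fun i : Fin k => x i = none)).card : ℝ)/2⌋ with hm₀
  have hiff : ∀ z : Fin k → Bool, ((k:ℝ) * d < ∑ i, dbarBes (x i) (z i)) ↔
      ¬ ((((Finset.univ.filter (fun i => ¬ x i = none)).filter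
          (fun i => ¬ (x i).getD false = z i)).card : ℤ) ≤ m₀) := by
    intro z
    rw [dist_eq, hm₀, Int.le_floor, not_le]
    push_cast
    constructor <;> intro h <;> linarith
  calc ∑ z : Fin k → Bool, (if (k:ℝ) * d < ∑ i, dbarBes (x i) (z i) then (1:ℝ) else 0)
      = ∑ z : Fin k → Bool, ((1:ℝ) - if ((((Finset.univ.filter (fun i => ¬ x i = none)).filter
            (fun i => ¬ (x i).getD false = z i)).card : ℤ) ≤ m₀) then (1:ℝ) else 0) := by
        refine Finset.sum_congr rfl fun z _ => ?_
        rw [if_congr (hiff z) rfl rfl]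
        split_ifs <;> simp
    _ = (Fintype.card (Fin k → Bool) : ℝ)
          - ((Finset.univ.filter (fun z : Fin k → Bool =>
              ((((Finset.univ.filter (fun i => ¬ x i = none)).filter
                (fun i => ¬ (x i).getD false = z i)).card : ℤ) ≤ m₀))).card : ℝ) := by
        rw [Finset.sum_sub_distrib, Finset.sum_const, Finset.sum_boole]
        simp [Finset.card_univ]
    _ = 2 ^ k - 2 ^ ((Finset.univ.filter (fun i : Fin k => x i = none)).card) *
          (binosum (k - (Finset.univ.filter (fun i : Fin k => x i = none)).card) m₀ : ℝ) := by
        rw [card_ball k x m₀]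
        push_cast
        congr 1
        simp [Fintype.card_fun]

/-- **Achievability for the surrogate BES source coding problem** (Theorem 7):
for the ternary memoryless source with binary reproduction alphabet and surrogate
distortion `d̄`, there exists a `(k, M, d, ε)` code with
`ε ≤ Σ_{j=0}^{k} C(k,j) δ^j (1−δ)^{k−j} (1 − 2^{−(k−j)} ⟨k−j choose ≤ ⌊kd − j/2⌋⟩)^M`. -/
theorem achievability_surrogate_BES
    (δ d : ℝ) (hδ0 : 0 < δ) (hδ1 : δ < 1) (hd : 0 ≤ d)
    (k M : ℕ) (hk : 0 < k) (hM : 0 < M) :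
    ∃ (f : (Fin k → Option Bool) → Fin M) (c : Fin M → (Fin k → Bool)),
      excessBes δ d k M f c
        ≤ ∑ j ∈ Finset.range (k + 1),
            (k.choose j : ℝ) * δ ^ j * (1 - δ) ^ (k - j) *
              (1 - ((2 : ℝ) ^ (k - j))⁻¹ *
                (binosum (k - j) ⌊(k : ℝ) * d - (j : ℝ) / 2⌋ : ℝ)) ^ M := by
  classical
  have hk' : (0:ℝ) < (k:ℝ) := by exact_mod_cast hk
  have hMne : (Finset.univ : Finset (Fin M)).Nonempty := ⟨⟨0, hM⟩, Finset.mem_univ _⟩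
  -- minimum-distortion encoder
  have encex : ∀ (c : Fin M → (Fin k → Bool)) (x : Fin k → Option Bool),
      ∃ m : Fin M, ∀ m', (∑ i, dbarBes (x i) (c m i)) ≤ (∑ i, dbarBes (x i) (c m' i)) := by
    intro c x
    obtain ⟨m, -, hm⟩ := Finset.exists_min_image Finset.univ
      (fun m => ∑ i, dbarBes (x i) (c m i)) hMne
    exact ⟨m, fun m' => hm m' (Finset.mem_univ _)⟩
  choose enc henc using encex
  set RHS : ℝ := ∑ j ∈ Finset.range (k + 1),
      (k.choose j : ℝ) * δ ^ j * (1 - δ) ^ (k - j) *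
        (1 - ((2 : ℝ) ^ (k - j))⁻¹ *
          (binosum (k - j) ⌊(k : ℝ) * d - (j : ℝ) / 2⌋ : ℝ)) ^ M with hRHS
  set J : (Fin k → Option Bool) → ℕ :=
    fun x => (Finset.univ.filter (fun i => x i = none)).card with hJ
  set B : ℕ → ℝ := fun j => (binosum (k - j) ⌊(k:ℝ) * d - (j:ℝ)/2⌋ : ℝ) with hB
  -- Step 1: with the min-distortion encoder the indicator factors over codewords
  have step1 : ∀ c, excessBes δ d k M (enc c) c
      = ∑ x : Fin k → Option Bool, (∏ i, P3 δ (x i)) *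
          ∏ m, (if (k:ℝ) * d < ∑ i, dbarBes (x i) (c m i) then (1:ℝ) else 0) := by
    intro c
    unfold excessBes
    refine Finset.sum_congr rfl fun x _ => ?_
    congr 1
    rw [← ite_forall_prod]
    refine if_congr ?_ rfl rfl
    rw [lt_div_iff₀ hk']
    constructor
    · intro h m
      calc (k:ℝ) * d = d * k := mul_comm _ _
        _ < ∑ i, dbarBes (x i) (c (enc c x) i) := h
        _ ≤ ∑ i, dbarBes (x i) (c m i) := henc c x m
    · intro h
      have := h (enc c x)
      linarith [mul_comm (k:ℝ) d]
  -- Step 2: averaging over codebooks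
  have step2 : ∑ c : Fin M → (Fin k → Bool), excessBes δ d k M (enc c) c
      = ∑ x : Fin k → Option Bool, (∏ i, P3 δ (x i)) *
          ((2:ℝ) ^ k - 2 ^ (J x) * B (J x)) ^ M := by
    rw [Finset.sum_congr rfl (fun c _ => step1 c), Finset.sum_comm]
    refine Finset.sum_congr rfl fun x _ => ?_
    rw [← Finset.mul_sum]
    congr 1
    rw [sum_prod_codebook (fun z => if (k:ℝ) * d < ∑ i, dbarBes (x i) (z i) then (1:ℝ) else 0),
      sum_z k d x]
  -- Step 3: group source sequences by erasure pattern
  have hmaps : ∀ x ∈ (Finset.univ : Finset (Fin k → Option Bool)),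
      Finset.univ.filter (fun i => x i = none) ∈ (Finset.univ : Finset (Fin k)).powerset :=
    fun x _ => Finset.mem_powerset.mpr (Finset.subset_univ _)
  have step3 : ∑ x : Fin k → Option Bool, (∏ i, P3 δ (x i)) *
        ((2:ℝ) ^ k - 2 ^ (J x) * B (J x)) ^ M
      = ∑ j ∈ Finset.range (k + 1), (k.choose j : ℝ) *
          ((2:ℝ) ^ (k - j) * (δ ^ j * ((1 - δ)/2) ^ (k - j) *
            ((2:ℝ) ^ k - 2 ^ j * B j) ^ M)) := by
    rw [← Finset.sum_fiberwise_of_maps_to hmaps]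
    have inner : ∀ s ∈ (Finset.univ : Finset (Fin k)).powerset,
        ∑ x ∈ Finset.univ.filter (fun x : Fin k → Option Bool =>
            Finset.univ.filter (fun i => x i = none) = s),
          (∏ i, P3 δ (x i)) * ((2:ℝ) ^ k - 2 ^ (J x) * B (J x)) ^ M
        = (2:ℝ) ^ (k - s.card) * (δ ^ s.card * ((1 - δ)/2) ^ (k - s.card) *
            ((2:ℝ) ^ k - 2 ^ s.card * B s.card) ^ M) := by
      intro s _
      have hconst : ∀ x ∈ Finset.univ.filter (fun x : Fin k → Option Bool =>
            Finset.univ.filter (fun i => x i = none) = s),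
          (∏ i, P3 δ (x i)) * ((2:ℝ) ^ k - 2 ^ (J x) * B (J x)) ^ M
          = δ ^ s.card * ((1 - δ)/2) ^ (k - s.card) *
              ((2:ℝ) ^ k - 2 ^ s.card * B s.card) ^ M := by
        intro x hx
        have hxs : Finset.univ.filter (fun i => x i = none) = s :=
          (Finset.mem_filter.mp hx).2
        have hJx : J x = s.card := by simp only [hJ]; rw [hxs]
        rw [prod_P3 δ k s x hxs, hJx]
      rw [Finset.sum_congr rfl hconst, Finset.sum_const, card_pattern k s, nsmul_eq_mul]
      push_cast
      ring
    rw [Finset.sum_congr rfl inner]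
    rw [sum_powerset_card (Finset.univ : Finset (Fin k))
      (fun n => (2:ℝ) ^ (k - n) * (δ ^ n * ((1 - δ)/2) ^ (k - n) *
        ((2:ℝ) ^ k - 2 ^ n * B n) ^ M))]
    simp only [Finset.card_univ, Fintype.card_fin, nsmul_eq_mul]
  -- Step 4: termwise algebra to match the RHS
  have step4 : ∑ j ∈ Finset.range (k + 1), (k.choose j : ℝ) *
        ((2:ℝ) ^ (k - j) * (δ ^ j * ((1 - δ)/2) ^ (k - j) *
          ((2:ℝ) ^ k - 2 ^ j * B j) ^ M))
      = ((2:ℝ) ^ k) ^ M * RHS := by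
    rw [hRHS, Finset.mul_sum]
    refine Finset.sum_congr rfl fun j hj => ?_
    have hjk : j ≤ k := Nat.lt_succ_iff.mp (Finset.mem_range.mp hj)
    have h2 : (2:ℝ) ^ k = 2 ^ j * 2 ^ (k - j) := by
      rw [← pow_add]
      congr 1
      omega
    have hpow : (2:ℝ) ^ (k - j) * ((1 - δ)/2) ^ (k - j) = (1 - δ) ^ (k - j) := by
      rw [← mul_pow]
      congr 1
      ring
    have hne : ((2:ℝ) ^ (k - j)) ≠ 0 := by positivity
    have hA : ((2:ℝ) ^ k) ^ M * (1 - ((2:ℝ) ^ (k - j))⁻¹ * B j) ^ M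
        = ((2:ℝ) ^ k - 2 ^ j * B j) ^ M := by
      rw [← mul_pow]
      congr 1
      rw [h2]
      field_simp
    calc (k.choose j : ℝ) * ((2:ℝ) ^ (k - j) * (δ ^ j * ((1 - δ)/2) ^ (k - j) *
          ((2:ℝ) ^ k - 2 ^ j * B j) ^ M))
        = (k.choose j : ℝ) * δ ^ j * ((2:ℝ) ^ (k - j) * ((1 - δ)/2) ^ (k - j)) *
            ((2:ℝ) ^ k - 2 ^ j * B j) ^ M := by ring
      _ = (k.choose j : ℝ) * δ ^ j * (1 - δ) ^ (k - j) *
            (((2:ℝ) ^ k) ^ M * (1 - ((2:ℝ) ^ (k - j))⁻¹ * B j) ^ M) := by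
          rw [hpow, hA]
      _ = ((2:ℝ) ^ k) ^ M * ((k.choose j : ℝ) * δ ^ j * (1 - δ) ^ (k - j) *
            (1 - ((2:ℝ) ^ (k - j))⁻¹ * B j) ^ M) := by ring
  -- Step 5: extract a good codebook
  have hCBne : (Finset.univ : Finset (Fin M → (Fin k → Bool))).Nonempty :=
    Finset.univ_nonempty
  have hsum : ∑ c : Fin M → (Fin k → Bool), excessBes δ d k M (enc c) c
      ≤ ∑ c : Fin M → (Fin k → Bool), RHS := by
    rw [step2, step3, step4, Finset.sum_const, Finset.card_univ, nsmul_eq_mul]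
    have hcard : (Fintype.card (Fin M → (Fin k → Bool)) : ℝ) = ((2:ℝ) ^ k) ^ M := by
      have : Fintype.card (Fin M → (Fin k → Bool)) = (2 ^ k) ^ M := by
        simp [Fintype.card_fun]
      rw [this]
      push_cast
      ring
    rw [hcard]
  obtain ⟨c, -, hc⟩ := Finset.exists_le_of_sum_le hCBne hsum
  exact ⟨enc c, c, hc⟩
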